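/- Let $u \colon \mathbb{R}^2 \to \mathbb{R}$ be $C^2$ and $\mathbb{Z}^2$-periodic, $h \colon \mathbb{R} \to \mathbb{R}$ be $C^1$ and $1$-periodic, $c \in \mathbb{R}$, and suppose everywhere $\big(1 + e^{h} u_{xx} + (c + e^{h} h') u_x\big)(1 + u_{yy}) - e^{h} u_{xy}^2 > 0$. Then for every $(x,y) \in \mathbb{R}^2$ one has $1 + e^{h(x)} u_{xx}(x,y) + (c + e^{h(x)} h'(x)) u_x(x,y) > 0$ and $1 + u_{yy}(x,y) > 0$; i.e., the product decomposition factors are everywhere positive. -/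

import Mathlib

noncomputable section

/-- First partial derivatives. -/
def px (u : ℝ → ℝ → ℝ) (x y : ℝ) : ℝ := deriv (fun t => u t y) x
def py (u : ℝ → ℝ → ℝ) (x y : ℝ) : ℝ := deriv (fun t => u x t) y
/-- Second partial derivatives. -/
def pxx (u : ℝ → ℝ → ℝ) (x y : ℝ) : ℝ := deriv (fun t => px u t y) x
def pyy (u : ℝ → ℝ → ℝ) (x y : ℝ) : ℝ := deriv (fun t => py u x t) y
def pxy (u : ℝ → ℝ → ℝ) (x y : ℝ) : ℝ := deriv (fun t => px u x t) y

/-- At a global minimum of a `C¹`-differentiable-derivative function, the second derivative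
is nonnegative. -/
lemma second_deriv_nonneg_at_min (g : ℝ → ℝ) (hg : ContDiff ℝ 2 g) (y₀ : ℝ)
    (hmin : ∀ y, g y₀ ≤ g y) : 0 ≤ deriv (deriv g) y₀ := by
  by_contra hneg
  push_neg at hneg
  have hg2 : ContDiff ℝ (1 + 1) g := by norm_num <;> exact hg
  have hd : Differentiable ℝ g ∧ _ ∧ ContDiff ℝ 1 (deriv g) := contDiff_succ_iff_deriv.mp hg2
  have hdg : ContDiff ℝ 1 (deriv g) := hd.2.2
  have hdiff : Differentiable ℝ (deriv g) := hdg.differentiable one_ne_zero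
  -- deriv g y₀ = 0
  have hloc : IsLocalMin g y₀ := by
    apply IsMinOn.isLocalMin (s := Set.univ)
    · intro y _; exact hmin y
    · exact Filter.univ_mem
  have h0 : deriv g y₀ = 0 := hloc.deriv_eq_zero
  -- slope of deriv g tends to deriv (deriv g) y₀ < 0
  have hder : HasDerivAt (deriv g) (deriv (deriv g) y₀) y₀ := (hdiff y₀).hasDerivAt
  have hslope := hasDerivAt_iff_tendsto_slope.mp hder
  have hev : ∀ᶠ z in nhdsWithin y₀ {y₀}ᶜ, slope (deriv g) y₀ z < 0 :=
    hslope.eventually (Filter.Tendsto.eventually_lt_const hneg Filter.tendsto_id)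
  have hev' : ∀ᶠ z in nhdsWithin y₀ (Set.Iio y₀), slope (deriv g) y₀ z < 0 := by
    refine hev.filter_mono (nhdsWithin_mono _ ?_)
    intro z hz
    exact fun hzz => absurd hzz (ne_of_lt hz)
  rw [eventually_nhdsWithin_iff] at hev'
  obtain ⟨ε, hε, hball⟩ := Metric.eventually_nhds_iff.mp hev'
  set a := y₀ - ε / 2 with ha
  have haly : a < y₀ := by simp [ha]; positivity
  -- deriv g positive on Ioo a y₀
  have hpos : ∀ z ∈ Set.Ioo a y₀, 0 < deriv g z := by
    intro z hz
    obtain ⟨hz1, hz2'⟩ := hz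
    have hdz : dist z y₀ < ε := by
      rw [Real.dist_eq, abs_lt]
      constructor <;> simp only [ha] at hz1 <;> linarith
    have hsl := hball hdz hz2'
    rw [slope_def_field, h0, sub_zero] at hsl
    have hz2 : z - y₀ < 0 := by linarith
    rcases div_neg_iff.mp hsl with ⟨h1, h2⟩ | ⟨h1, h2⟩
    · exact h1
    · linarith
  -- g strictly monotone on [a, y₀]
  have hmono : StrictMonoOn g (Set.Icc a y₀) := by
    apply strictMonoOn_of_deriv_pos (convex_Icc a y₀)
      (hg.continuous.continuousOn)
    intro z hz
    rw [interior_Icc] at hz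
    exact hpos z hz
  have : g a < g y₀ :=
    hmono (Set.left_mem_Icc.mpr haly.le) (Set.right_mem_Icc.mpr haly.le) haly
  exact absurd (hmin a) (not_le.mpr this)

theorem stmt_4 (u : ℝ → ℝ → ℝ) (hu : ContDiff ℝ 2 (Function.uncurry u))
    (huper : ∀ (x y : ℝ) (m n : ℤ), u (x + m) (y + n) = u x y)
    (h : ℝ → ℝ) (hh : ContDiff ℝ 1 h) (hhper : Function.Periodic h 1) (c : ℝ)
    (hpos : ∀ x y : ℝ,
      (1 + Real.exp (h x) * pxx u x y + (c + Real.exp (h x) * deriv h x) * px u x y) *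
          (1 + pyy u x y) - Real.exp (h x) * (pxy u x y) ^ 2 > 0) :
    ∀ x y : ℝ,
      1 + Real.exp (h x) * pxx u x y + (c + Real.exp (h x) * deriv h x) * px u x y > 0 ∧
        1 + pyy u x y > 0 := by
  intro x y
  set g : ℝ → ℝ := fun t => u x t with hgdef
  have hg : ContDiff ℝ 2 g := by
    have : g = Function.uncurry u ∘ (fun t : ℝ => (x, t)) := rfl
    rw [this]
    exact hu.comp (contDiff_const.prodMk contDiff_id)
  have hgper : Function.Periodic g 1 := by
    intro t
    have := huper x t 0 1
    simpa using this
  have hpyy : ∀ t, pyy u x t = deriv (deriv g) t := by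
    intro t
    simp only [pyy, py, hgdef]
  -- the second factor is nonzero everywhere (as a function of t)
  have hBne : ∀ t : ℝ, 1 + pyy u x t ≠ 0 := by
    intro t hB
    have := hpos x t
    rw [hB] at this
    nlinarith [Real.exp_pos (h x), sq_nonneg (pxy u x t)]
  -- continuity of t ↦ 1 + pyy u x t
  have hg2 : ContDiff ℝ (1 + 1) g := by norm_num <;> exact hg
  have hdg : ContDiff ℝ 1 (deriv g) := (contDiff_succ_iff_deriv.mp hg2).2.2
  have hcont : Continuous fun t => 1 + pyy u x t := by
    have : Continuous (deriv (deriv g)) := hdg.continuous_deriv le_rfl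
    exact continuous_const.add this
  -- g attains a global minimum at some y₀
  obtain ⟨y₀, hy₀mem, hy₀⟩ := (isCompact_Icc (a := (0:ℝ)) (b := 1)).exists_isMinOn
    ⟨0, by norm_num⟩ hg.continuous.continuousOn
  have hmin : ∀ t, g y₀ ≤ g t := by
    intro t
    have hfr : g (Int.fract t) = g t := by
      rw [Int.fract]
      simpa using hgper.sub_zsmul_eq ⌊t⌋ (x := t)
    rw [← hfr]
    exact hy₀ (Set.mem_Icc.mpr ⟨(Int.fract_nonneg t), (Int.fract_lt_one t).le⟩)
  have hd2 : 0 ≤ deriv (deriv g) y₀ := second_deriv_nonneg_at_min g hg y₀ hmin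
  have hBpos0 : 0 < 1 + pyy u x y₀ := by rw [hpyy]; linarith
  -- by IVT, 1 + pyy u x t > 0 for all t
  have hBpos : ∀ t, 0 < 1 + pyy u x t := by
    intro t
    by_contra hle
    push_neg at hle
    have hlt : 1 + pyy u x t < 0 := lt_of_le_of_ne hle (hBne t)
    have := intermediate_value_uIcc (a := t) (b := y₀)
      (f := fun s => 1 + pyy u x s) hcont.continuousOn
    have h0mem : (0:ℝ) ∈ Set.uIcc (1 + pyy u x t) (1 + pyy u x y₀) :=
      Set.mem_uIcc.mpr (Or.inl ⟨hlt.le, hBpos0.le⟩)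
    obtain ⟨s, _, hs⟩ := this h0mem
    exact hBne s hs
  refine ⟨?_, hBpos y⟩
  have hP := hpos x y
  have hB := hBpos y
  nlinarith [Real.exp_pos (h x), sq_nonneg (pxy u x y)]

end
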